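/- Let q be a power of an odd prime with q ≥ 5, let m ≥ 2 be an integer that does not divide q−1 and such that every prime factor of m divides q−1 and, if 4 divides m, then 4 divides q−1. Let l = ord_m(q), assume l divides m, set k = m/l, and assume k divides q−1 and gcd((q−1)/k, l) = 1. Let t = (q^l − 1)/m. Then l divides q^{l−1} + q^{l−2} + … + q + 1, the equality t = [(q−1)/k]·[(q^{l−1} + … + q + 1)/l] holds, and the additive order of t modulo q−1 equals k, i.e., gcd(t, q−1) = (q−1)/k. -/

import Mathlib

open Finset

-- LTE for odd prime, y = 1
lemma lte_odd' {p q : ℕ} (hp : p.Prime) (hpodd : Odd p) (hq : 2 ≤ q)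
    (hpq : p ∣ q - 1) (n : ℕ) (hn : n ≠ 0) :
    (q ^ n - 1).factorization p = (q - 1).factorization p + n.factorization p := by
  haveI : Fact p.Prime := ⟨hp⟩
  have hx : ¬ p ∣ q := by
    intro h
    have h1 : p ∣ q - (q - 1) := Nat.dvd_sub h hpq
    rw [Nat.sub_sub_self (by omega)] at h1
    exact hp.ne_one (Nat.dvd_one.mp h1)
  have := padicValNat.pow_sub_pow (p := p) hpodd (x := q) (y := 1) (by omega) (by simpa) hx hn
  simp only [one_pow] at this
  rw [Nat.factorization_def _ hp, Nat.factorization_def _ hp, Nat.factorization_def _ hp, this]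

-- LTE for p = 2, even n
lemma lte_two' {q : ℕ} (hq : 2 ≤ q) (hqodd : ¬ 2 ∣ q) {n : ℕ} (hn : n ≠ 0) (hne : Even n) :
    (q ^ n - 1).factorization 2 + 1 =
      (q + 1).factorization 2 + (q - 1).factorization 2 + n.factorization 2 := by
  have h2 : Nat.Prime 2 := Nat.prime_two
  have h := padicValNat.pow_two_sub_pow (x := q) (y := 1) (by omega)
    (by simpa using (by omega : 2 ∣ q - 1)) hqodd hn hne
  simp only [one_pow] at h
  rw [Nat.factorization_def _ h2, Nat.factorization_def _ h2, Nat.factorization_def _ h2,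
    Nat.factorization_def _ h2, h]

-- S is odd when l is odd and q is odd
lemma sum_odd_of_odd {q l : ℕ} (hq : ¬ 2 ∣ q) (hl : ¬ 2 ∣ l) :
    ¬ 2 ∣ (∑ i ∈ Finset.range l, q ^ i) := by
  intro h
  have h2 : ((∑ i ∈ Finset.range l, q ^ i : ℕ) : ZMod 2) = 0 :=
    (ZMod.natCast_eq_zero_iff _ 2).mpr h
  have hq2 : ((q : ℕ) : ZMod 2) = 1 := by
    have : q % 2 = 1 := by omega
    rw [← ZMod.natCast_mod, this, Nat.cast_one]
  rw [Nat.cast_sum] at h2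
  simp only [Nat.cast_pow, hq2, one_pow, Finset.sum_const, Finset.card_range, nsmul_eq_mul,
    mul_one] at h2
  exact hl ((ZMod.natCast_eq_zero_iff l 2).mp h2)

/-- With `l = ord_m q`, `k = m/l`, `t = (q^l - 1)/m`: `l` divides `q^{l-1} + … + q + 1`,
`t = [(q-1)/k]·[(q^{l-1} + … + q + 1)/l]`, and the additive order of `t` modulo `q - 1`
equals `k`, i.e. `gcd(t, q-1) = (q-1)/k`. -/
theorem t_structure_and_additive_order
    (q m : ℕ)
    (hodd : ∃ p n : ℕ, p.Prime ∧ Odd p ∧ q = p ^ n)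
    (hq5 : 5 ≤ q)
    (hm2 : 2 ≤ m)
    (hmndvd : ¬ m ∣ (q - 1))
    (hprime : ∀ p : ℕ, p.Prime → p ∣ m → p ∣ (q - 1))
    (h4 : 4 ∣ m → 4 ∣ (q - 1))
    (l k t : ℕ)
    (hl : l = orderOf ((q : ZMod m)))
    (hldvd : l ∣ m)
    (hk : k = m / l)
    (hkdvd : k ∣ (q - 1))
    (hcop : Nat.Coprime ((q - 1) / k) l)
    (ht : t = (q ^ l - 1) / m) :
    l ∣ (∑ i ∈ Finset.range l, q ^ i) ∧
    t = ((q - 1) / k) * ((∑ i ∈ Finset.range l, q ^ i) / l) ∧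
    addOrderOf ((t : ZMod (q - 1))) = k ∧
    Nat.gcd t (q - 1) = (q - 1) / k := by
  obtain ⟨p0, n0, hp0, hp0odd, hq0⟩ := hodd
  have hqodd : ¬ 2 ∣ q := by
    rw [hq0]
    intro h
    have := (Nat.prime_two.dvd_of_dvd_pow h)
    rcases hp0odd with ⟨c, hc⟩
    omega
  set S := ∑ i ∈ Finset.range l, q ^ i with hS
  have hl0 : l ≠ 0 := by
    rintro rfl
    rw [Nat.zero_dvd] at hldvd
    omega
  have hS1 : 1 ≤ S := by
    calc 1 = ∑ i ∈ Finset.range 1, q ^ i := by simp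
    _ ≤ S := Finset.sum_le_sum_of_subset (by simpa using Nat.pos_of_ne_zero hl0)
  have hSpos : S ≠ 0 := by omega
  -- geometric sum identity
  have hgeom : (q - 1) * S = q ^ l - 1 := by
    have hql : 1 ≤ q ^ l := Nat.one_le_pow _ _ (by omega)
    have : ((q : ℤ) - 1) * (S : ℤ) = (q : ℤ) ^ l - 1 := by
      rw [mul_comm, hS]
      push_cast
      exact geom_sum_mul (q : ℤ) l
    have h2 : ((q - 1) * S : ℕ) = ((q ^ l - 1 : ℕ) : ℤ) := by
      push_cast [Nat.cast_sub (by omega : 1 ≤ q), Nat.cast_sub hql]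
      exact this
    exact_mod_cast h2
  have hql5 : 5 ≤ q ^ l := by
    calc 5 ≤ q := hq5
    _ = q ^ 1 := (pow_one q).symm
    _ ≤ q ^ l := Nat.pow_le_pow_right (by omega) (by omega)
  have hql1 : q ^ l - 1 ≠ 0 := by omega
  have hq1 : q - 1 ≠ 0 := by omega
  -- key factorization identity
  have hfact : (q ^ l - 1).factorization = (q - 1).factorization + S.factorization := by
    rw [← hgeom, Nat.factorization_mul hq1 hSpos]
  -- k * l = m
  have hkl : k * l = m := by rw [hk]; exact Nat.div_mul_cancel hldvd
  have hk0 : k ≠ 0 := by rintro rfl; omega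
  have hq1even : (2:ℕ) ∣ q + 1 := by omega
  -- Claim A: l ∣ S
  have hA : l ∣ S := by
    rw [← Nat.factorization_le_iff_dvd hl0 hSpos, Finsupp.le_def]
    intro p
    by_cases hp : p.Prime
    · by_cases hpl : p ∣ l
      · have hpm : p ∣ m := hpl.trans hldvd
        have hpq1 : p ∣ q - 1 := hprime p hp hpm
        rcases hp.eq_two_or_odd' with rfl | hpodd
        · -- p = 2, l is even
          have hleven : Even l := (even_iff_two_dvd).mpr hpl
          have h2 := lte_two' (by omega) hqodd hl0 hleven
          have hv1 : 1 ≤ (q + 1).factorization 2 :=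
            (Nat.prime_two).factorization_pos_of_dvd (by omega) hq1even
          have hfp : (q ^ l - 1).factorization 2 = (q - 1).factorization 2 + S.factorization 2 := by
            rw [hfact]; simp
          omega
        · have h1 := lte_odd' hp hpodd (by omega) hpq1 l hl0
          have hfp : (q ^ l - 1).factorization p = (q - 1).factorization p + S.factorization p := by
            rw [hfact]; simp
          omega
      · rw [Nat.factorization_eq_zero_of_not_dvd hpl]
        exact Nat.zero_le _
    · rw [Nat.factorization_eq_zero_of_not_prime _ hp]
      exact Nat.zero_le _
  -- Claim B: gcd(S/l, k) = 1
  have hu0 : S / l ≠ 0 := by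
    have := Nat.div_pos (Nat.le_of_dvd (by omega) hA) (by omega)
    omega
  have hSeq : S = l * (S / l) := (Nat.mul_div_cancel' hA).symm
  have hB : Nat.Coprime (S / l) k := by
    by_contra hB
    obtain ⟨p, hp, hpu, hpk⟩ := Nat.Prime.not_coprime_iff_dvd.mp hB
    have hvS : S.factorization p = l.factorization p + (S / l).factorization p := by
      conv_lhs => rw [hSeq]
      rw [Nat.factorization_mul hl0 hu0]
      simp
    have hvu : 1 ≤ (S / l).factorization p := hp.factorization_pos_of_dvd hu0 hpu
    have hpq1 : p ∣ q - 1 := hpk.trans hkdvd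
    rcases hp.eq_two_or_odd' with rfl | hpodd
    · by_cases hpl : 2 ∣ l
      · have h4m : 4 ∣ m := by
          rw [← hkl]
          obtain ⟨a, ha⟩ := hpk
          obtain ⟨b, hb⟩ := hpl
          exact ⟨a * b, by rw [ha, hb]; ring⟩
        have hq4 : 4 ∣ q - 1 := h4 h4m
        have hv1 : (q + 1).factorization 2 = 1 := by
          have hd : (2:ℕ) ∣ q + 1 := by omega
          have hnd : ¬ (4:ℕ) ∣ q + 1 := by omega
          have h1 : 1 ≤ (q + 1).factorization 2 :=
            (Nat.prime_two).factorization_pos_of_dvd (by omega) hd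
          have h2 : ¬ 2 ≤ (q + 1).factorization 2 := by
            intro h2
            refine hnd ?_
            have := (Nat.Prime.pow_dvd_iff_le_factorization Nat.prime_two
              (by omega : q + 1 ≠ 0)).mpr h2
            norm_num at this
            exact this
          omega
        have h2 := lte_two' (by omega) hqodd hl0 ((even_iff_two_dvd).mpr hpl)
        have hfp : (q ^ l - 1).factorization 2 = (q - 1).factorization 2 + S.factorization 2 := by
          rw [hfact]; simp
        omega
      · exact sum_odd_of_odd hqodd hpl (hpu.trans (Nat.div_dvd_of_dvd hA))
    · have h1 := lte_odd' hp hpodd (by omega) hpq1 l hl0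
      have hfp : (q ^ l - 1).factorization p = (q - 1).factorization p + S.factorization p := by
        rw [hfact]; simp
      omega
  -- t formula
  have hmdvd : m ∣ q ^ l - 1 := by
    have h1 : (q : ZMod m) ^ l = 1 := by rw [hl]; exact pow_orderOf_eq_one _
    have h2 : ((q ^ l : ℕ) : ZMod m) = ((1 : ℕ) : ZMod m) := by push_cast; rw [h1]
    have h3 : q ^ l ≡ 1 [MOD m] := (ZMod.natCast_eq_natCast_iff _ _ _).mp h2
    exact (Nat.modEq_iff_dvd' (by omega)).mp h3.symm
  have ht2 : t = ((q - 1) / k) * (S / l) := by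
    rw [ht, ← hgeom, ← hkl]
    exact (Nat.div_mul_div_comm hkdvd hA).symm
  -- gcd
  have hgcd : Nat.gcd t (q - 1) = (q - 1) / k := by
    calc Nat.gcd t (q - 1)
        = Nat.gcd (((q - 1) / k) * (S / l)) (((q - 1) / k) * k) := by
          rw [ht2, Nat.div_mul_cancel hkdvd]
      _ = ((q - 1) / k) * Nat.gcd (S / l) k := Nat.gcd_mul_left _ _ _
      _ = (q - 1) / k := by rw [hB.gcd_eq_one, mul_one]
  refine ⟨hA, ht2, ?_, hgcd⟩
  rw [ZMod.addOrderOf_coe t hq1, Nat.gcd_comm, hgcd]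
  exact Nat.div_div_self hkdvd hq1
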